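/- arXiv:2402.12579 — 2 statements merged into one kernel-verified Lean document; each statement's English description precedes it below -/
import Mathlib

section
/- Let X ⊆ {0,1}^ℤ be a measure-theoretically subordinate subshift. Then the base measure ν is unique and ergodic. Moreover, ν is the unique measure of maximal density on X, i.e. ν(1) = sup{μ(1) : μ ∈ 𝓜(X)}, and ν is the only measure in 𝓜(X) attaining this supremum. -/
open MeasureTheory Filter Topology

/-- The full shift space `{0,1}^ℤ`, with `Bool` playing the role of `{0,1}`
(`false` ↔ `0`, `true` ↔ `1`). -/
abbrev BinSeq : Type := ℤ → Bool

/-- The left shift `σ`. -/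
def shift : BinSeq → BinSeq := fun x n => x (n + 1)

/-- The product shift `σ × σ`. -/
def shift2 : BinSeq × BinSeq → BinSeq × BinSeq := Prod.map shift shift

/-- The product shift `σ × σ × σ` on triples `((w,x),y)`. -/
def shift3 : (BinSeq × BinSeq) × BinSeq → (BinSeq × BinSeq) × BinSeq := Prod.map shift2 shift

/-- Coordinatewise multiplication `M(x,y)` of two 0-1 sequences. -/
def Mmul : BinSeq × BinSeq → BinSeq := fun p n => p.1 n && p.2 n

/-- The map `N((w,x),y) = (1-y)·w + y·x` (coordinatewise: `x` where `y = 1`, `w` where `y = 0`). -/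
def Nmap : (BinSeq × BinSeq) × BinSeq → BinSeq := fun t n => bif t.2 n then t.1.2 n else t.1.1 n

/-- The coordinatewise partial order `y ≤ x` on `{0,1}^ℤ`. -/
def leSeq (y x : BinSeq) : Prop := ∀ n, y n ≤ x n

/-- A subshift: a closed, shift-invariant subset of `{0,1}^ℤ`. -/
def IsSubshift (X : Set BinSeq) : Prop := IsClosed X ∧ shift ⁻¹' X = X

/-- The set of `T`-invariant Borel probability measures. -/
def InvProb {α : Type*} [MeasurableSpace α] (T : α → α) : Set (Measure α) :=
  {μ | IsProbabilityMeasure μ ∧ Measure.map T μ = μ}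

/-- `𝓜(X)`: shift-invariant Borel probability measures concentrated on `X`. -/
def MeasOn (X : Set BinSeq) : Set (Measure BinSeq) :=
  {μ | μ ∈ InvProb shift ∧ μ X = 1}

/-- `𝓜(Z)` for `Z ⊆ {0,1}^ℤ × {0,1}^ℤ`. -/
def MeasOn2 (Z : Set (BinSeq × BinSeq)) : Set (Measure (BinSeq × BinSeq)) :=
  {ρ | ρ ∈ InvProb shift2 ∧ ρ Z = 1}

/-- `X` is a measure-theoretically subordinate subshift with base measure `ν`:
`𝓜(X) = {M_*(ρ) : ρ ∈ 𝓜({0,1}^ℤ × {0,1}^ℤ, σ×σ), (π₁)_*(ρ) = ν}`. -/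
def Subord (X : Set BinSeq) (ν : Measure BinSeq) : Prop :=
  MeasOn X = {μ | ∃ ρ ∈ InvProb shift2,
    Measure.map Prod.fst ρ = ν ∧ Measure.map Mmul ρ = μ}

/-- `X` is a sandwich measure-theoretically subordinate subshift with pre-base measure `ρ`:
`𝓜(X) = {N_*(κ) : κ ∈ 𝓜(({0,1}^ℤ)³), (π₁,₂)_*(κ) = ρ}`. -/
def SandwichSubord (X : Set BinSeq) (ρ : Measure (BinSeq × BinSeq)) : Prop :=
  MeasOn X = {μ | ∃ κ ∈ InvProb shift3,
    Measure.map Prod.fst κ = ρ ∧ Measure.map Nmap κ = μ}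

/-- `ρ({(w,x) : w ≤ x coordinatewise}) = 1`: a pre-base measure satisfying this is a base
measure. -/
def AboveDiag (ρ : Measure (BinSeq × BinSeq)) : Prop :=
  ρ {p : BinSeq × BinSeq | ∀ n, p.1 n ≤ p.2 n} = 1

/-- The cylinder `{x : x₀ = b}`. -/
def cylB (b : Bool) : Set BinSeq := {x : BinSeq | x 0 = b}

/-- The set `[w,x] = {σ^k y : w ≤ y ≤ x, k ∈ ℤ}`. -/
def sandwichSet (w x : BinSeq) : Set BinSeq :=
  {z | ∃ (k : ℤ) (y : BinSeq), (∀ n, w n ≤ y n) ∧ (∀ n, y n ≤ x n) ∧ z = fun n => y (n + k)}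

/-- Topological entropy (base-2) of a subshift: exponential growth rate of the number of
`n`-blocks appearing in `X`. -/
noncomputable def htop (X : Set BinSeq) : ℝ :=
  Filter.limsup (fun n : ℕ =>
    Real.logb 2
      ((Set.ncard {A : Fin n → Bool | ∃ x ∈ X, ∀ i : Fin n, x ((i : ℕ) : ℤ) = A i} : ℝ))
      / (n : ℝ)) Filter.atTop

/-- Kolmogorov–Sinai entropy (base-2) of a shift-invariant measure on `{0,1}^ℤ`,
computed via the generating partition into cylinders. -/
noncomputable def entropy (μ : Measure BinSeq) : ℝ :=
  Filter.limsup (fun n : ℕ =>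
    (∑ A : Fin n → Bool,
      Real.negMulLog ((μ {x : BinSeq | ∀ i : Fin n, x ((i : ℕ) : ℤ) = A i}).toReal))
      / ((n : ℝ) * Real.log 2)) Filter.atTop

/-- Kolmogorov–Sinai entropy (base-2) of a `σ×σ`-invariant measure on
`{0,1}^ℤ × {0,1}^ℤ`. -/
noncomputable def entropy2 (ρ : Measure (BinSeq × BinSeq)) : ℝ :=
  Filter.limsup (fun n : ℕ =>
    (∑ A : Fin n → Bool, ∑ B : Fin n → Bool,
      Real.negMulLog ((ρ {p : BinSeq × BinSeq |
        (∀ i : Fin n, p.1 ((i : ℕ) : ℤ) = A i) ∧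
        (∀ i : Fin n, p.2 ((i : ℕ) : ℤ) = B i)}).toReal))
      / ((n : ℝ) * Real.log 2)) Filter.atTop

open scoped Classical in
/-- Topological pressure (base-2) of a subshift `X` with potential `φ`:
`𝒫_{X,φ} = lim (1/n) log₂ Σ_{A ∈ ℒ_n(X)} 2^{sup_{x ∈ [A] ∩ X} φ⁽ⁿ⁾(x)}`. -/
noncomputable def pressure (X : Set BinSeq) (φ : BinSeq → ℝ) : ℝ :=
  Filter.limsup (fun n : ℕ =>
    Real.logb 2 (∑ A : Fin n → Bool,
      if ∃ x ∈ X, ∀ i : Fin n, x ((i : ℕ) : ℤ) = A i then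
        (2 : ℝ) ^ sSup {r : ℝ | ∃ x ∈ X, (∀ i : Fin n, x ((i : ℕ) : ℤ) = A i) ∧
          r = ∑ k ∈ Finset.range n, φ (shift^[k] x)}
      else 0) / (n : ℝ)) Filter.atTop

/-- Birkhoff average of a continuous function along the first `N` points of the `T`-orbit. -/
noncomputable def birkAvg {α : Type*} [TopologicalSpace α] (T : α → α) (x : α) (N : ℕ)
    (f : C(α, ℝ)) : ℝ :=
  (∑ n ∈ Finset.range N, f (T^[n] x)) / (N : ℝ)

/-- `x` is quasi-generic for `μ` along `(N i)`: the empirical measures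
`(1/N_i) Σ_{n<N_i} δ_{T^n x}` converge weakly-* to `μ`. -/
def QuasiGenericAlong {α : Type*} [TopologicalSpace α] [MeasurableSpace α]
    (T : α → α) (x : α) (N : ℕ → ℕ) (μ : Measure α) : Prop :=
  ∀ f : C(α, ℝ), Filter.Tendsto (fun i => birkAvg T x (N i) f) Filter.atTop
    (nhds (∫ y, f y ∂μ))

/-- `x` is generic for `μ`. -/
def GenericFor {α : Type*} [TopologicalSpace α] [MeasurableSpace α]
    (T : α → α) (x : α) (μ : Measure α) : Prop :=
  QuasiGenericAlong T x (fun i => i) μ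

/-- Weak-* convergence of a sequence of measures. -/
def WeakTendsto {α : Type*} [TopologicalSpace α] [MeasurableSpace α]
    (μs : ℕ → Measure α) (μ : Measure α) : Prop :=
  ∀ f : C(α, ℝ), Filter.Tendsto (fun K => ∫ y, f y ∂(μs K)) Filter.atTop
    (nhds (∫ y, f y ∂μ))

/-- `V(y)`: the invariant measures for which `y` is quasi-generic (along some
increasing sequence). -/
def Vset (y : BinSeq) : Set (Measure BinSeq) :=
  {μ | μ ∈ InvProb shift ∧ ∃ N : ℕ → ℕ, StrictMono N ∧ QuasiGenericAlong shift y N μ}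

/-- `V_{(N_i)}(y)`: the invariant measures for which `y` is quasi-generic along a
subsequence of `(N_i)`. -/
def VsetAlong (N : ℕ → ℕ) (y : BinSeq) : Set (Measure BinSeq) :=
  {μ | μ ∈ InvProb shift ∧ ∃ φ : ℕ → ℕ, StrictMono φ ∧ QuasiGenericAlong shift y (N ∘ φ) μ}

/-- `β` is the Bernoulli product measure on `{0,1}^ℤ` with `β({x : x₀ = 0}) = p`. -/
def IsBernoulli (p : ENNReal) (β : Measure BinSeq) : Prop :=
  IsProbabilityMeasure β ∧ ∀ (s : Finset ℤ) (A : ℤ → Bool),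
    β {x : BinSeq | ∀ i ∈ s, x i = A i} = ∏ i ∈ s, (if A i = false then p else 1 - p)


section StmtZeroAux

open MeasureTheory

lemma measurable_shift' : Measurable shift :=
  measurable_pi_lambda _ fun n => measurable_pi_apply (n + 1)

lemma measurable_shift2' : Measurable shift2 :=
  (measurable_shift'.comp measurable_fst).prodMk (measurable_shift'.comp measurable_snd)

lemma measurable_Mmul' : Measurable Mmul :=
  measurable_pi_lambda _ fun n =>
    Measurable.comp (g := fun q : Bool × Bool => q.1 && q.2)
      (f := fun p : BinSeq × BinSeq => (p.1 n, p.2 n))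
      (measurable_of_countable _)
      (((measurable_pi_apply n).comp measurable_fst).prodMk
        ((measurable_pi_apply n).comp measurable_snd))

lemma measurableSet_cylB' (b : Bool) : MeasurableSet (cylB b) :=
  show MeasurableSet ((fun x : BinSeq => x 0) ⁻¹' {b}) from
    measurable_pi_apply 0 (measurableSet_singleton b)

lemma Smeas (k : ℤ) :
    MeasurableSet {p : BinSeq × BinSeq | p.1 k = true ∧ p.2 k = false} := by
  have h1 : Measurable fun p : BinSeq × BinSeq => p.1 k :=
    (measurable_pi_apply k).comp measurable_fst
  have h2 : Measurable fun p : BinSeq × BinSeq => p.2 k :=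
    (measurable_pi_apply k).comp measurable_snd
  exact (h1 (measurableSet_singleton true)).inter (h2 (measurableSet_singleton false))

lemma inv_apply_meas {α : Type*} [MeasurableSpace α] {T : α → α} (hT : Measurable T)
    {μ : Measure α} (h : Measure.map T μ = μ) {s : Set α} (hs : MeasurableSet s) :
    μ (T ⁻¹' s) = μ s := by
  conv_rhs => rw [← h]
  rw [Measure.map_apply hT hs]

lemma subord_mem (X : Set BinSeq) (ν : Measure BinSeq) (hν : ν ∈ InvProb shift)
    (hsub : Subord X ν) : ν ∈ MeasOn X := by
  haveI := hν.1
  have hdiag : Measurable (fun x : BinSeq => (x, x)) := measurable_id.prodMk measurable_id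
  rw [Subord] at hsub
  rw [hsub]
  refine ⟨Measure.map (fun x => (x, x)) ν, ⟨Measure.isProbabilityMeasure_map hdiag.aemeasurable, ?_⟩,
    ?_, ?_⟩
  · rw [Measure.map_map measurable_shift2' hdiag]
    have : shift2 ∘ (fun x : BinSeq => (x, x)) = (fun x : BinSeq => (x, x)) ∘ shift := rfl
    rw [this, ← Measure.map_map hdiag measurable_shift', hν.2]
  · rw [Measure.map_map measurable_fst hdiag]
    have : (Prod.fst ∘ fun x : BinSeq => (x, x)) = id := rfl
    rw [this, Measure.map_id]
  · rw [Measure.map_map measurable_Mmul' hdiag]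
    have : (Mmul ∘ fun x : BinSeq => (x, x)) = id := by
      funext x
      simp only [Function.comp_apply, id_eq]
      funext n
      exact Bool.and_self _
    rw [this, Measure.map_id]

lemma subord_density (X : Set BinSeq) (ν : Measure BinSeq) (hsub : Subord X ν) :
    ∀ μ ∈ MeasOn X, μ (cylB true) ≤ ν (cylB true) := by
  intro μ hμ
  rw [Subord] at hsub
  rw [hsub] at hμ
  obtain ⟨ρ, ⟨hρp, hρinv⟩, hfst, hM⟩ := hμ
  rw [← hM, ← hfst, Measure.map_apply measurable_Mmul' (measurableSet_cylB' true),
    Measure.map_apply measurable_fst (measurableSet_cylB' true)]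
  apply measure_mono
  intro p hp
  have h : Mmul p 0 = true := hp
  simp only [Mmul, Bool.and_eq_true] at h
  exact h.1

lemma subord_rigid (X : Set BinSeq) (ν : Measure BinSeq) (hsub : Subord X ν) :
    ∀ μ ∈ MeasOn X, μ (cylB true) = ν (cylB true) → μ = ν := by
  intro μ hμ heq
  rw [Subord] at hsub
  rw [hsub] at hμ
  obtain ⟨ρ, ⟨hρp, hρinv⟩, hfst, hM⟩ := hμ
  haveI := hρp
  set S : ℤ → Set (BinSeq × BinSeq) :=
    fun k => {p | p.1 k = true ∧ p.2 k = false} with hSdef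
  have hstep : ∀ k : ℤ, ρ (S (k + 1)) = ρ (S k) := by
    intro k
    have hpre : shift2 ⁻¹' S k = S (k + 1) := rfl
    rw [← hpre]
    exact inv_apply_meas measurable_shift2' hρinv (Smeas k)
  have hS0 : ρ (S 0) = 0 := by
    have hT : Mmul ⁻¹' cylB true
        = {p : BinSeq × BinSeq | p.1 0 = true ∧ p.2 0 = true} := by
      ext p
      show Mmul p 0 = true ↔ _
      simp [Mmul, Bool.and_eq_true]
    have hμ1 : μ (cylB true) = ρ {p : BinSeq × BinSeq | p.1 0 = true ∧ p.2 0 = true} := by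
      rw [← hM, Measure.map_apply measurable_Mmul' (measurableSet_cylB' true), hT]
    have hν1 : ν (cylB true) = ρ {p : BinSeq × BinSeq | p.1 0 = true} := by
      rw [← hfst, Measure.map_apply measurable_fst (measurableSet_cylB' true)]
      rfl
    have hdis : Disjoint {p : BinSeq × BinSeq | p.1 0 = true ∧ p.2 0 = true} (S 0) := by
      rw [Set.disjoint_left]
      rintro p ⟨-, h2⟩ ⟨-, h2'⟩
      simp_all
    have hsplit : ρ {p : BinSeq × BinSeq | p.1 0 = true}
        = ρ {p : BinSeq × BinSeq | p.1 0 = true ∧ p.2 0 = true} + ρ (S 0) := by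
      rw [← measure_union hdis (Smeas 0)]
      congr 1
      ext p
      simp only [Set.mem_setOf_eq, Set.mem_union, hSdef]
      cases h2 : p.2 0 <;> simp [h2]
    have h' : ρ {p : BinSeq × BinSeq | p.1 0 = true ∧ p.2 0 = true} + ρ (S 0)
        = ρ {p : BinSeq × BinSeq | p.1 0 = true ∧ p.2 0 = true} + 0 := by
      rw [add_zero, ← hsplit, ← hν1, ← heq, hμ1]
    exact (ENNReal.add_right_inj (measure_ne_top _ _)).mp h'
  have hall : ∀ k : ℤ, ρ (S k) = 0 := by
    intro k
    induction k using Int.induction_on with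
    | zero => exact hS0
    | succ i ih => rw [hstep (i : ℤ)]; exact ih
    | pred i ih =>
      have h := hstep (-(i : ℤ) - 1)
      rw [show (-(i : ℤ) - 1 + 1) = -(i : ℤ) by ring] at h
      rw [← h]
      exact ih
  have hcover : {p : BinSeq × BinSeq | ¬ Mmul p = p.1} ⊆ ⋃ k : ℤ, S k := by
    intro p hp
    simp only [Set.mem_setOf_eq] at hp
    by_contra hc
    simp only [Set.mem_iUnion, not_exists] at hc
    apply hp
    funext n
    have hn := hc n
    simp only [hSdef, Set.mem_setOf_eq, not_and] at hn
    simp only [Mmul]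
    cases h1 : p.1 n <;> cases h2 : p.2 n <;> simp_all
  have h0 : ρ {p : BinSeq × BinSeq | ¬ Mmul p = p.1} = 0 :=
    measure_mono_null hcover (measure_iUnion_null fun k => hall k)
  have hae : Mmul =ᵐ[ρ] (Prod.fst : BinSeq × BinSeq → BinSeq) := by
    rw [Filter.EventuallyEq, ae_iff]
    exact h0
  rw [← hM, ← hfst]
  exact Measure.map_congr hae

lemma cond_mem (X : Set BinSeq) (ν : Measure BinSeq) (hX : IsSubshift X)
    (hν : ν ∈ InvProb shift) (hνX : ν ∈ MeasOn X)
    {A : Set BinSeq} (hA : MeasurableSet A) (hAinv : shift ⁻¹' A = A) (hA0 : ν A ≠ 0) :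
    (ν A)⁻¹ • ν.restrict A ∈ MeasOn X := by
  haveI := hν.1
  have hAtop : ν A ≠ ⊤ := measure_ne_top ν A
  have hXm : MeasurableSet X := hX.1.measurableSet
  refine ⟨⟨⟨?_⟩, ?_⟩, ?_⟩
  · rw [Measure.smul_apply, Measure.restrict_apply_univ, smul_eq_mul,
      ENNReal.inv_mul_cancel hA0 hAtop]
  · rw [Measure.map_smul]
    congr 1
    ext s hs
    rw [Measure.map_apply measurable_shift' hs, Measure.restrict_apply hs,
      Measure.restrict_apply (measurable_shift' hs)]
    have h' : shift ⁻¹' s ∩ A = shift ⁻¹' (s ∩ A) := by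
      rw [Set.preimage_inter, hAinv]
    rw [h', inv_apply_meas measurable_shift' hν.2 (hs.inter hA)]
  · rw [Measure.smul_apply, Measure.restrict_apply hXm, smul_eq_mul]
    have hXc : ν Xᶜ = 0 := by
      have h := measure_compl hXm (measure_ne_top ν X)
      rw [hνX.2, measure_univ] at h
      simp [h]
    have h' : ν (X ∩ A) = ν A := by
      apply le_antisymm (measure_mono Set.inter_subset_right)
      have hsub' : A ⊆ (X ∩ A) ∪ Xᶜ := by
        intro x hx
        by_cases hxX : x ∈ X
        · exact Or.inl ⟨hxX, hx⟩
        · exact Or.inr hxX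
      calc ν A ≤ ν ((X ∩ A) ∪ Xᶜ) := measure_mono hsub'
        _ ≤ ν (X ∩ A) + ν Xᶜ := measure_union_le _ _
        _ = ν (X ∩ A) := by rw [hXc, add_zero]
    rw [h', ENNReal.inv_mul_cancel hA0 hAtop]

lemma subord_ergodic (X : Set BinSeq) (ν : Measure BinSeq) (hX : IsSubshift X)
    (hν : ν ∈ InvProb shift) (hsub : Subord X ν) : Ergodic shift ν := by
  haveI := hν.1
  have hνX : ν ∈ MeasOn X := subord_mem X ν hν hsub
  refine ⟨⟨measurable_shift', hν.2⟩, ⟨?_⟩⟩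
  intro s hs hinv
  rw [Filter.eventuallyConst_set']
  by_contra hcon
  push_neg at hcon
  obtain ⟨h0, h1⟩ := hcon
  rw [MeasureTheory.ae_eq_empty] at h0
  rw [MeasureTheory.ae_eq_univ] at h1
  have hsc : shift ⁻¹' sᶜ = sᶜ := by rw [Set.preimage_compl, hinv]
  have hm1 := cond_mem X ν hX hν hνX hs hinv h0
  have hm2 := cond_mem X ν hX hν hνX hs.compl hsc h1
  set ν₁ := (ν s)⁻¹ • ν.restrict s with hν₁
  set ν₂ := (ν sᶜ)⁻¹ • ν.restrict sᶜ with hν₂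
  have hc1 := subord_density X ν hsub _ hm1
  have hc2 := subord_density X ν hsub _ hm2
  have hcylm := measurableSet_cylB' true
  have hatop : ν s ≠ ⊤ := measure_ne_top ν s
  have hbtop : ν sᶜ ≠ ⊤ := measure_ne_top ν sᶜ
  have hd1 : ν s * ν₁ (cylB true) = ν (cylB true ∩ s) := by
    rw [hν₁, Measure.smul_apply, smul_eq_mul, ← mul_assoc,
      ENNReal.mul_inv_cancel h0 hatop, one_mul, Measure.restrict_apply hcylm]
  have hd2 : ν sᶜ * ν₂ (cylB true) = ν (cylB true ∩ sᶜ) := by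
    rw [hν₂, Measure.smul_apply, smul_eq_mul, ← mul_assoc,
      ENNReal.mul_inv_cancel h1 hbtop, one_mul, Measure.restrict_apply hcylm]
  have hdecomp : ν s * ν₁ (cylB true) + ν sᶜ * ν₂ (cylB true) = ν (cylB true) := by
    rw [hd1, hd2]
    have h' := measure_inter_add_diff (μ := ν) (cylB true) hs
    rw [Set.diff_eq] at h'
    exact h'
  have hab : ν s + ν sᶜ = 1 := by rw [measure_add_measure_compl hs, measure_univ]
  have he1 : ν₁ (cylB true) = ν (cylB true) := by
    by_contra hne
    have hlt : ν₁ (cylB true) < ν (cylB true) := lt_of_le_of_ne hc1 hne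
    have hlt' : ν (cylB true) < ν (cylB true) := by
      calc ν (cylB true) = ν s * ν₁ (cylB true) + ν sᶜ * ν₂ (cylB true) := hdecomp.symm
        _ < ν s * ν (cylB true) + ν sᶜ * ν (cylB true) := by
            refine ENNReal.add_lt_add_of_lt_of_le (hd2 ▸ measure_ne_top ν _) ?_ ?_
            · exact (ENNReal.mul_lt_mul_iff_right h0 hatop).mpr hlt
            · exact mul_le_mul_right hc2 _
        _ = (ν s + ν sᶜ) * ν (cylB true) := (add_mul _ _ _).symm
        _ = ν (cylB true) := by rw [hab, one_mul]
    exact lt_irrefl _ hlt'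
  have heq1 : ν₁ = ν := subord_rigid X ν hsub _ hm1 he1
  apply h1
  rw [← heq1, hν₁, Measure.smul_apply, Measure.restrict_apply hs.compl,
    Set.compl_inter_self, measure_empty, smul_eq_mul, mul_zero]

end StmtZeroAux

/-- For a measure-theoretically subordinate subshift `X`, the base measure `ν`
is unique and ergodic; moreover it is the unique measure of maximal density on `X`. -/
theorem stmt0 (X : Set BinSeq) (ν : Measure BinSeq)
    (hX : IsSubshift X) (hν : ν ∈ InvProb shift) (hsub : Subord X ν) :
    (∀ ν' ∈ InvProb shift, Subord X ν' → ν' = ν) ∧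
    Ergodic shift ν ∧
    ν ∈ MeasOn X ∧
    (∀ μ ∈ MeasOn X, μ (cylB true) ≤ ν (cylB true)) ∧
    (∀ μ ∈ MeasOn X, μ (cylB true) = ν (cylB true) → μ = ν) := by
  have hmem := subord_mem X ν hν hsub
  have hdens := subord_density X ν hsub
  have hrig := subord_rigid X ν hsub
  refine ⟨?_, subord_ergodic X ν hX hν hsub, hmem, hdens, hrig⟩
  intro ν' hν' hsub'
  have hmem' := subord_mem X ν' hν' hsub'
  exact hrig ν' hmem' (le_antisymm (hdens ν' hmem') (subord_density X ν' hsub' ν hmem))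
end

section
/- Let X ⊆ {0,1}^ℤ be a measure-theoretically subordinate subshift with base measure ν. Then the subshift X' := M(supp(ν) × {0,1}^ℤ), the hereditary closure of the topological support of ν, satisfies X' ⊆ X and 𝓜(X) = 𝓜(X'). -/
open MeasureTheory Filter Topology

/-- The topological support of a measure: points all of whose open neighbourhoods have
positive measure. -/
def mSupp (ν : Measure BinSeq) : Set BinSeq :=
  {x : BinSeq | ∀ U : Set BinSeq, IsOpen U → x ∈ U → 0 < ν U}

open scoped ENNReal

section AuxLemmas
lemma continuous_shift : Continuous shift :=
  continuous_pi fun n => continuous_apply (n + 1)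

lemma continuous_Mmul : Continuous Mmul := by
  refine continuous_pi fun n => ?_
  have h1 : Continuous fun p : BinSeq × BinSeq => p.1 n :=
    (continuous_apply n).comp continuous_fst
  have h2 : Continuous fun p : BinSeq × BinSeq => p.2 n :=
    (continuous_apply n).comp continuous_snd
  exact (continuous_of_discreteTopology
    (f := fun q : Bool × Bool => q.1 && q.2)).comp (h1.prodMk h2)

lemma shift_iter (k : ℕ) (x : BinSeq) : shift^[k] x = fun m => x (m + k) := by
  induction k generalizing x with
  | zero => funext m; simp
  | succ k ih =>
    rw [Function.iterate_succ_apply, ih]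
    funext m
    show x (m + k + 1) = x (m + (k + 1 : ℕ))
    congr 1
    push_cast
    ring

lemma ennreal_cancel {a b c : ℝ≥0∞} (hc : c ≠ ⊤) (h : a + c = b + c) : a = b :=
  WithTop.add_right_cancel hc h

noncomputable def orbMeas (p : BinSeq) (q : ℕ) : Measure BinSeq :=
  (q : ℝ≥0∞)⁻¹ • ∑ k ∈ Finset.range q, Measure.dirac (shift^[k] p)

lemma map_finsetSum' {α β ι : Type*} [MeasurableSpace α] [MeasurableSpace β] {f : α → β}
    (hf : Measurable f) (s : Finset ι) (μ : ι → Measure α) :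
    Measure.map f (∑ i ∈ s, μ i) = ∑ i ∈ s, Measure.map f (μ i) := by
  classical
  induction s using Finset.induction with
  | empty => simp
  | insert _ _ h ih =>
    rw [Finset.sum_insert h, Finset.sum_insert h, Measure.map_add _ _ hf, ih]

lemma orbMeas_inv {p : BinSeq} {q : ℕ} (hp : shift^[q] p = p) :
    Measure.map shift (orbMeas p q) = orbMeas p q := by
  unfold orbMeas
  rw [Measure.map_smul, map_finsetSum' continuous_shift.measurable]
  congr 1
  set f : ℕ → Measure BinSeq := fun k => Measure.dirac (shift^[k] p) with hf
  have h1 : ∀ k, Measure.map shift (f k) = f (k + 1) := fun k => by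
    rw [hf, Measure.map_dirac' continuous_shift.measurable,
      ← Function.iterate_succ_apply' shift]
  rw [show (fun i => Measure.map shift (Measure.dirac (shift^[i] p))) = fun k => f (k + 1)
    from funext h1]
  have hq0 : f q = f 0 := by simp [hf, hp]
  have h2 : (∑ k ∈ Finset.range q, f (k + 1)) + f 0
      = (∑ k ∈ Finset.range q, f k) + f 0 := by
    rw [← Finset.sum_range_succ' f q, Finset.sum_range_succ f q, hq0]
  ext s hs
  have h3 := congrArg (fun μ : Measure BinSeq => μ s) h2
  simp only [Measure.add_apply, Measure.finset_sum_apply] at h3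
  have := ennreal_cancel (measure_ne_top (f 0) s) h3
  simp only [Measure.finset_sum_apply]
  exact this

lemma orbMeas_prob (p : BinSeq) {q : ℕ} (hq : q ≠ 0) :
    IsProbabilityMeasure (orbMeas p q) := by
  constructor
  rw [orbMeas, Measure.smul_apply, Measure.finset_sum_apply]
  simp only [measure_univ, Finset.sum_const, Finset.card_range, nsmul_eq_mul, mul_one,
    smul_eq_mul]
  exact ENNReal.inv_mul_cancel (by exact_mod_cast hq) (by simp)

lemma mSupp_compl (ν : Measure BinSeq) :
    (mSupp ν)ᶜ = ⋃₀ {U : Set BinSeq | IsOpen U ∧ ν U = 0} := by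
  ext x
  simp only [Set.mem_compl_iff, mSupp, Set.mem_setOf_eq, not_forall, Set.mem_sUnion]
  constructor
  · rintro ⟨U, hU, hx, hpos⟩
    exact ⟨U, ⟨hU, le_zero_iff.mp (not_lt.mp hpos)⟩, hx⟩
  · rintro ⟨U, ⟨hU, h0⟩, hx⟩
    exact ⟨U, hU, hx, by simp [h0]⟩

lemma isClosed_mSupp (ν : Measure BinSeq) : IsClosed (mSupp ν) := by
  rw [← isOpen_compl_iff, mSupp_compl]
  exact isOpen_sUnion fun U hU => hU.1

lemma mSupp_full (ν : Measure BinSeq) [IsProbabilityMeasure ν] : ν (mSupp ν) = 1 := by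
  have hcompl : ν (mSupp ν)ᶜ = 0 := by
    rw [mSupp_compl]
    obtain ⟨T, hTc, hTsub, hTeq⟩ := TopologicalSpace.isOpen_sUnion_countable
      {U : Set BinSeq | IsOpen U ∧ ν U = 0} (fun U hU => hU.1)
    rw [← hTeq, measure_sUnion_null_iff hTc]
    exact fun s hs => (hTsub hs).2
  exact (prob_compl_eq_zero_iff (isClosed_mSupp ν).measurableSet).mp hcompl
end AuxLemmas

/-- For a measure-theoretically subordinate subshift `X` with base measure `ν`,
the hereditary closure `X' = M(supp ν × {0,1}^ℤ)` of the support of `ν` satisfies `X' ⊆ X` and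
`𝓜(X) = 𝓜(X')`. -/
theorem stmt1 (X : Set BinSeq) (ν : Measure BinSeq)
    (hX : IsSubshift X) (hν : ν ∈ InvProb shift) (hsub : Subord X ν) :
    Mmul '' (mSupp ν ×ˢ (Set.univ : Set BinSeq)) ⊆ X ∧
    MeasOn X = MeasOn (Mmul '' (mSupp ν ×ˢ (Set.univ : Set BinSeq))) := by
  obtain ⟨hXcl, hXinv⟩ := hX
  obtain ⟨hνprob, hνinv⟩ := hν
  haveI : IsProbabilityMeasure ν := hνprob
  -- Key step: every Mmul (w, y) with w ∈ mSupp ν lies in X.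
  have key : ∀ w ∈ mSupp ν, ∀ y : BinSeq, Mmul (w, y) ∈ X := by
    intro w hw y
    have happrox : ∀ n : ℕ, ∃ z' ∈ X, ∀ m : ℤ, |m| ≤ (n : ℤ) → z' m = Mmul (w, y) m := by
      intro n
      set q : ℕ := 2 * n + 1 with hq_def
      have hq0 : q ≠ 0 := by omega
      set p : BinSeq := fun k => y ((k + n) % q - n) with hp_def
      have hper : shift^[q] p = p := by
        rw [shift_iter]
        funext m
        show y ((m + q + n) % q - n) = y ((m + n) % q - n)
        congr 2
        have : m + (q : ℤ) + n = (m + n) + q := by ring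
        rw [this]
        simp [Int.add_emod]
      have hpy : ∀ m : ℤ, |m| ≤ (n : ℤ) → p m = y m := by
        intro m hm
        show y ((m + n) % q - n) = y m
        have habs := abs_le.mp hm
        have h1 : (0 : ℤ) ≤ m + n := by omega
        have h2 : m + (n : ℤ) < q := by
          have : (q : ℤ) = 2 * n + 1 := by exact_mod_cast rfl
          omega
        rw [Int.emod_eq_of_lt h1 h2]
        congr 1
        ring
      set mμ := orbMeas p q with hmμ
      haveI : IsProbabilityMeasure mμ := orbMeas_prob p hq0
      set ρ := ν.prod mμ with hρ
      have hρinv : Measure.map shift2 ρ = ρ := by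
        show Measure.map (Prod.map shift shift) ρ = ρ
        rw [hρ, ← Measure.map_prod_map _ _ continuous_shift.measurable
          continuous_shift.measurable, hνinv, orbMeas_inv hper]
      have hρfst : Measure.map Prod.fst ρ = ν := by
        rw [hρ, Measure.map_fst_prod, measure_univ, one_smul]
      set μn := Measure.map Mmul ρ with hμn_def
      haveI : IsProbabilityMeasure μn :=
        Measure.isProbabilityMeasure_map continuous_Mmul.measurable.aemeasurable
      have hμn : μn ∈ MeasOn X := by
        rw [hsub]
        exact ⟨ρ, ⟨inferInstance, hρinv⟩, hρfst, rfl⟩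
      refine ⟨Mmul (w, p), ?_, ?_⟩
      · by_contra hzX
        have hopen : IsOpen Xᶜ := hXcl.isOpen_compl
        have h0 : μn Xᶜ = 0 :=
          (prob_compl_eq_zero_iff hXcl.measurableSet).mpr hμn.2
        obtain ⟨V, W, hV, hW, hwV, hpW, hsub'⟩ :=
          isOpen_prod_iff.mp (hopen.preimage continuous_Mmul) w p hzX
        have hle : ρ (V ×ˢ W) ≤ μn Xᶜ := by
          rw [hμn_def, Measure.map_apply continuous_Mmul.measurable hopen.measurableSet]
          exact measure_mono hsub'
        have hWpos : 0 < mμ W := by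
          have hd : (1 : ℝ≥0∞) ≤ ∑ k ∈ Finset.range q, Measure.dirac (shift^[k] p) W := by
            calc (1 : ℝ≥0∞) = Measure.dirac (shift^[0] p) W := by
                  rw [Function.iterate_zero_apply,
                    Measure.dirac_apply' _ hW.measurableSet]
                  simp [hpW]
            _ ≤ _ := Finset.single_le_sum (f := fun k => Measure.dirac (shift^[k] p) W)
                  (fun i _ => zero_le) (Finset.mem_range.mpr (Nat.pos_of_ne_zero hq0))
          have : (q : ℝ≥0∞)⁻¹ * 1 ≤ mμ W := by
            rw [hmμ, orbMeas, Measure.smul_apply, smul_eq_mul, Measure.finset_sum_apply]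
            exact mul_le_mul_right hd _
          refine lt_of_lt_of_le ?_ this
          rw [mul_one]
          exact ENNReal.inv_pos.mpr (by simp)
        have hpos : 0 < μn Xᶜ := by
          refine lt_of_lt_of_le ?_ hle
          rw [hρ, Measure.prod_prod]
          exact ENNReal.mul_pos (hw V hV hwV).ne' hWpos.ne'
        rw [h0] at hpos
        exact lt_irrefl _ hpos
      · intro m hm
        show (w m && p m) = (w m && y m)
        rw [hpy m hm]
    choose z' hz'X hz'agree using happrox
    have htend : Tendsto z' atTop (nhds (Mmul (w, y))) := by
      rw [tendsto_pi_nhds]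
      intro m
      refine Tendsto.congr' ?_ (tendsto_const_nhds (x := Mmul (w, y) m) (f := atTop))
      filter_upwards [eventually_ge_atTop m.natAbs] with n hn
      exact (hz'agree n m (by rw [Int.abs_eq_natAbs]; exact_mod_cast hn)).symm
    exact hXcl.mem_of_tendsto htend (Eventually.of_forall hz'X)
  have hX'subX : Mmul '' (mSupp ν ×ˢ (Set.univ : Set BinSeq)) ⊆ X := by
    rintro z ⟨⟨w, y⟩, hmem, rfl⟩
    exact key w hmem.1 y
  refine ⟨hX'subX, ?_⟩
  set X' := Mmul '' (mSupp ν ×ˢ (Set.univ : Set BinSeq)) with hX'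
  have hX'meas : MeasurableSet X' := by
    have hc : IsCompact (mSupp ν ×ˢ (Set.univ : Set BinSeq)) :=
      ((isClosed_mSupp ν).isCompact).prod isCompact_univ
    exact ((hc.image continuous_Mmul).isClosed).measurableSet
  ext μ
  constructor
  · intro hμ
    haveI : IsProbabilityMeasure μ := hμ.1.1
    obtain ⟨ρ, hρinv, hρfst, hρM⟩ := hsub ▸ hμ
    haveI : IsProbabilityMeasure ρ := hρinv.1
    refine ⟨hμ.1, le_antisymm prob_le_one ?_⟩
    have h1 : ρ (mSupp ν ×ˢ (Set.univ : Set BinSeq)) = 1 := by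
      rw [Set.prod_univ, ← Measure.map_apply measurable_fst
        (isClosed_mSupp ν).measurableSet, hρfst]
      exact mSupp_full ν
    calc (1 : ℝ≥0∞) = ρ (mSupp ν ×ˢ (Set.univ : Set BinSeq)) := h1.symm
      _ ≤ ρ (Mmul ⁻¹' X') := measure_mono fun x hx => Set.mem_image_of_mem _ hx
      _ = μ X' := by
          rw [← hρM, Measure.map_apply continuous_Mmul.measurable hX'meas]
  · intro hμ
    haveI : IsProbabilityMeasure μ := hμ.1.1
    exact ⟨hμ.1, le_antisymm prob_le_one (hμ.2 ▸ measure_mono hX'subX)⟩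
end
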